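/- Let B be a standard graded artinian k-algebra, let d ≥ 1 and A = B ⊗_k k[x]/(x^d), let ℓ̄ ∈ B₁ be a linear form and ℓ = ℓ̄ + x ∈ A₁. Fix integers i, t with i ≥ d−1 and t ≥ d−1, and assume B_{i+t} ≠ 0. Assume the characteristic of k is either zero or a prime which does not divide the nonzero integer ∏_{p=1}^{d−1} det(C_{t,p,d}). Then the multiplication map ·ℓ^t : A_i → A_{i+t} has full rank if and only if the d maps ·ℓ̄^{2q+t−(d−1)} : B_{i−q} → B_{i+q+t−(d−1)}, for q = 0, 1, …, d−1, all have full rank for the same reason. -/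

import Mathlib

open scoped BigOperators

/-- Multiplication by `a` is injective as a map on the subspace `V`. -/
def MulInjOn {k R : Type*} [Field k] [CommRing R] [Algebra k R]
    (V : Submodule k R) (a : R) : Prop :=
  ∀ v ∈ V, a * v = 0 → v = 0

/-- Multiplication by `a` maps the subspace `V` onto the subspace `W`. -/
def MulSurjOnto {k R : Type*} [Field k] [CommRing R] [Algebra k R]
    (V W : Submodule k R) (a : R) : Prop :=
  ∀ w ∈ W, ∃ v ∈ V, a * v = w

/-- The multiplication map `·a : V → W` has full rank: it is injective or surjective. -/
def MulFullRank {k R : Type*} [Field k] [CommRing R] [Algebra k R]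
    (V W : Submodule k R) (a : R) : Prop :=
  MulInjOn V a ∨ MulSurjOnto V W a

/-- `𝒜` is the grading of a standard graded artinian `k`-algebra structure on `R`:
the components form an internal direct sum, vanish in negative degrees, are
multiplicative, the degree-zero part is spanned by `1`, the algebra is generated in
degree one, and `R` is a finite-dimensional `k`-vector space (equivalently, artinian). -/
structure IsStdGradedArtinian (k : Type*) [Field k] (R : Type*) [CommRing R] [Algebra k R]
    (𝒜 : ℤ → Submodule k R) : Prop where
  internal : DirectSum.IsInternal 𝒜
  one_mem : (1 : R) ∈ 𝒜 0
  mul_mem : ∀ {i j : ℤ} {a b : R}, a ∈ 𝒜 i → b ∈ 𝒜 j → a * b ∈ 𝒜 (i + j)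
  neg_bot : ∀ i : ℤ, i < 0 → 𝒜 i = ⊥
  zero_spanOne : 𝒜 0 = Submodule.span k {(1 : R)}
  succ_eq : ∀ i : ℤ, 0 ≤ i → 𝒜 (i + 1) = 𝒜 1 * 𝒜 i
  finiteDim : FiniteDimensional k R

/-- `A` (graded by `ℬ`) is the extension `B ⊗ₖ k[x]/(x^d)` of `B` (graded by `𝒜`):
`φ` is the canonical inclusion of `B`, `x` has degree one with `x^d = 0`, and each
graded component decomposes as `ℬ j = ⊕_{q=0}^{d-1} x^q · φ(𝒜 (j - q))`. -/
structure IsCIExtension {k B A : Type*} [Field k] [CommRing B] [Algebra k B]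
    [CommRing A] [Algebra k A]
    (𝒜 : ℤ → Submodule k B) (ℬ : ℤ → Submodule k A)
    (φ : B →ₐ[k] A) (x : A) (d : ℕ) : Prop where
  map_mem : ∀ (j : ℤ) (b : B), b ∈ 𝒜 j → φ b ∈ ℬ j
  x_mem : x ∈ ℬ 1
  x_pow : x ^ d = 0
  decomp_mem : ∀ (j : ℤ) (f : Fin d → B), (∀ q : Fin d, f q ∈ 𝒜 (j - ((q : ℕ) : ℤ))) →
    (∑ q : Fin d, x ^ (q : ℕ) * φ (f q)) ∈ ℬ j
  decomp_exists : ∀ (j : ℤ), ∀ c ∈ ℬ j, ∃ f : Fin d → B,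
    (∀ q : Fin d, f q ∈ 𝒜 (j - ((q : ℕ) : ℤ))) ∧ c = ∑ q : Fin d, x ^ (q : ℕ) * φ (f q)
  decomp_unique : ∀ (j : ℤ) (f : Fin d → B), (∀ q : Fin d, f q ∈ 𝒜 (j - ((q : ℕ) : ℤ))) →
    (∑ q : Fin d, x ^ (q : ℕ) * φ (f q)) = 0 → ∀ q : Fin d, f q = 0

/-- `A` (graded by `ℬ`) is the extension `B ⊗ₖ k[x₁,…,xₙ]/(x₁^{d₁},…,xₙ^{dₙ})` of `B`
(graded by `𝒜`). -/
structure IsMultiCIExtension {k B A : Type*} [Field k] [CommRing B] [Algebra k B]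
    [CommRing A] [Algebra k A] {n : ℕ}
    (𝒜 : ℤ → Submodule k B) (ℬ : ℤ → Submodule k A)
    (φ : B →ₐ[k] A) (x : Fin n → A) (dv : Fin n → ℕ) : Prop where
  map_mem : ∀ (j : ℤ) (b : B), b ∈ 𝒜 j → φ b ∈ ℬ j
  x_mem : ∀ m : Fin n, x m ∈ ℬ 1
  x_pow : ∀ m : Fin n, x m ^ dv m = 0
  decomp_mem : ∀ (j : ℤ) (f : ((m : Fin n) → Fin (dv m)) → B),
    (∀ e, f e ∈ 𝒜 (j - ∑ m : Fin n, ((e m : ℕ) : ℤ))) →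
    (∑ e : (m : Fin n) → Fin (dv m), (∏ m : Fin n, x m ^ ((e m : ℕ))) * φ (f e)) ∈ ℬ j
  decomp_exists : ∀ (j : ℤ), ∀ c ∈ ℬ j, ∃ f : ((m : Fin n) → Fin (dv m)) → B,
    (∀ e, f e ∈ 𝒜 (j - ∑ m : Fin n, ((e m : ℕ) : ℤ))) ∧
    c = ∑ e : (m : Fin n) → Fin (dv m), (∏ m : Fin n, x m ^ ((e m : ℕ))) * φ (f e)
  decomp_unique : ∀ (j : ℤ) (f : ((m : Fin n) → Fin (dv m)) → B),
    (∀ e, f e ∈ 𝒜 (j - ∑ m : Fin n, ((e m : ℕ) : ℤ))) →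
    (∑ e : (m : Fin n) → Fin (dv m), (∏ m : Fin n, x m ^ ((e m : ℕ))) * φ (f e)) = 0 →
    ∀ e, f e = 0

/-- The weak Lefschetz property. -/
def HasWLP {k R : Type*} [Field k] [CommRing R] [Algebra k R]
    (𝒜 : ℤ → Submodule k R) : Prop :=
  ∃ ℓ ∈ 𝒜 1, ∀ i : ℤ, 0 ≤ i → MulFullRank (𝒜 i) (𝒜 (i + 1)) ℓ

/-- The strong Lefschetz property. -/
def HasSLP {k R : Type*} [Field k] [CommRing R] [Algebra k R]
    (𝒜 : ℤ → Submodule k R) : Prop :=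
  ∃ ℓ ∈ 𝒜 1, ∀ i : ℤ, 0 ≤ i → ∀ t : ℕ, 1 ≤ t → MulFullRank (𝒜 i) (𝒜 (i + t)) (ℓ ^ t)

/-- The Hilbert function of the graded algebra. -/
noncomputable def hilb {k R : Type*} [Field k] [CommRing R] [Algebra k R]
    (𝒜 : ℤ → Submodule k R) (i : ℤ) : ℕ :=
  Module.finrank k (𝒜 i)

/-- The algebra is almost centered. -/
def AlmostCentered {k R : Type*} [Field k] [CommRing R] [Algebra k R]
    (𝒜 : ℤ → Submodule k R) : Prop :=
  ∀ i j : ℤ, i < j →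
    (hilb 𝒜 i < hilb 𝒜 j → ∀ s : ℕ, hilb 𝒜 (i - s) ≤ hilb 𝒜 (j + s)) ∧
    (hilb 𝒜 j < hilb 𝒜 i → ∀ s : ℕ, hilb 𝒜 (j + s) ≤ hilb 𝒜 (i - s))

/-- `binomZ t j` is the binomial coefficient `t` choose `j` for an integer `j`,
equal to `0` for `j < 0` or `j > t`. -/
def binomZ (t : ℕ) (j : ℤ) : ℤ := if 0 ≤ j then (t.choose j.toNat : ℤ) else 0

/-- The `(d-p) × (d-p)` integer matrix `C_{t,p,d}` whose `(r,c)` entry (with `1 ≤ r,c ≤ d-p`)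
is `binom(t, d+1-r-c)`. -/
def Cmat (t p d : ℕ) : Matrix (Fin (d - p)) (Fin (d - p)) ℤ :=
  Matrix.of fun r c => binomZ t ((d : ℤ) - 1 - (r : ℕ) - (c : ℕ))

/-- The characteristic of `k` is zero, or a prime not dividing the integer `N`. -/
def CharCond (k : Type*) [Field k] (N : ℤ) : Prop :=
  CharZero k ∨ ∃ p : ℕ, p.Prime ∧ CharP k p ∧ ¬ ((p : ℤ) ∣ N)

open Polynomial in
lemma sparse_not_dvd : ∀ (kk : ℕ) (P : Polynomial ℚ), P ≠ 0 → P.support.card ≤ kk →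
    ¬ (Polynomial.X + 1) ^ kk ∣ P := by
  intro kk
  induction kk with
  | zero =>
    intro P hP hc _
    exact hP (Polynomial.support_eq_empty.mp (Finset.card_eq_zero.mp (Nat.le_zero.mp hc)))
  | succ kk ih =>
    intro P hP hc hdvd
    set v := P.natTrailingDegree with hv
    obtain ⟨Q, hQ⟩ : (X : ℚ[X]) ^ v ∣ P :=
      Polynomial.X_pow_dvd_iff.mpr fun _ hd => Polynomial.coeff_eq_zero_of_lt_natTrailingDegree hd
    have hQne : Q ≠ 0 := by rintro rfl; simp at hQ; exact hP hQ
    have hQ0 : Q.coeff 0 ≠ 0 := by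
      have h1 : P.coeff v ≠ 0 :=
        Polynomial.mem_support_iff.mp (Polynomial.natTrailingDegree_mem_support_of_nonzero hP)
      have h2 : (X ^ v * Q).coeff v = Q.coeff 0 := by
        simpa using Polynomial.coeff_X_pow_mul Q v 0
      rw [← hQ] at h2
      rwa [h2] at h1
    have hcard : Q.support.card ≤ kk + 1 := by
      refine le_trans ?_ hc
      refine Finset.card_le_card_of_injOn (fun n => n + v) ?_ ?_
      · intro n hn
        simp only [Finset.mem_coe, Polynomial.mem_support_iff] at hn ⊢
        rw [hQ, Polynomial.coeff_X_pow_mul]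
        exact hn
      · intro a _ b _ h
        simp only at h
        omega
    have hdvdQ : (X + 1 : ℚ[X]) ^ (kk + 1) ∣ Q := by
      have hcop : IsCoprime ((X + 1 : ℚ[X]) ^ (kk + 1)) (X ^ v) :=
        (IsCoprime.pow (⟨1, -1, by ring⟩ : IsCoprime ((X + 1 : ℚ[X])) (X : ℚ[X])))
      exact hcop.dvd_of_dvd_mul_left (hQ ▸ hdvd)
    set Q' := Polynomial.derivative Q with hQ'def
    have hQ'ne : Q' ≠ 0 := by
      intro h0
      have hdeg : Q.natDegree = 0 := Polynomial.natDegree_eq_zero_of_derivative_eq_zero h0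
      have hXdeg : ((X : ℚ[X]) + 1).natDegree = 1 := by
        simpa using Polynomial.natDegree_X_add_C (1 : ℚ)
      have hd1 : (kk + 1 : ℕ) ≤ Q.natDegree := by
        have := Polynomial.natDegree_le_of_dvd hdvdQ hQne
        rw [Polynomial.natDegree_pow, hXdeg] at this
        omega
      omega
    have hdvd' : (X + 1 : ℚ[X]) ^ kk ∣ Q' := by
      obtain ⟨R, hR⟩ := hdvdQ
      rw [hQ'def, hR, Polynomial.derivative_mul, Polynomial.derivative_pow]
      refine dvd_add (Dvd.dvd.mul_right ?_ _) (Dvd.dvd.mul_right (pow_dvd_pow _ (by omega)) _)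
      simp only [Nat.add_sub_cancel]
      exact ((dvd_refl _).mul_left _).mul_right _
    have hcard' : Q'.support.card ≤ kk := by
      have h0mem : (0 : ℕ) ∈ Q.support := Polynomial.mem_support_iff.mpr hQ0
      have hsub : Q'.support.card ≤ (Q.support \ {0}).card := by
        refine Finset.card_le_card_of_injOn (fun n => n + 1) ?_ ?_
        · intro n hn
          simp only [Finset.mem_coe, Polynomial.mem_support_iff] at hn
          rw [hQ'def, Polynomial.coeff_derivative] at hn
          have : Q.coeff (n + 1) ≠ 0 := fun h => hn (by simp [h])
          simp [Polynomial.mem_support_iff, this]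
        · intro a _ b _ h
          simp only at h
          omega
      have : (Q.support \ {0}).card = Q.support.card - 1 := by
        rw [Finset.card_sdiff_of_subset (by simpa using h0mem)]
        simp
      omega
    exact ih Q' hQ'ne hcard' hdvd'

open Polynomial in
lemma det_Cmat_ne_zero (t p d : ℕ) (hd : 1 ≤ d) (hp : p ≤ d - 1) (ht : d - 1 ≤ t) :
    (Cmat t p d).det ≠ 0 := by
  intro h0
  set n := d - p with hn
  have hn1 : 1 ≤ n := by omega
  -- pass to ℚ
  set Mq : Matrix (Fin n) (Fin n) ℚ := ((Int.castRingHom ℚ).mapMatrix (Cmat t p d)) with hMq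
  have hdetq : Mq.det = 0 := by
    rw [hMq, ← RingHom.map_det, h0]; simp
  obtain ⟨vv, hvne, hvm⟩ := Matrix.exists_vecMul_eq_zero_iff.mpr hdetq
  set Qp : ℚ[X] := ∑ a : Fin n, Polynomial.C (vv a) * Polynomial.X ^ (a : ℕ) with hQp
  have hQpcoeff : ∀ a : Fin n, Qp.coeff (a : ℕ) = vv a := by
    intro a
    rw [hQp, Polynomial.finset_sum_coeff]
    rw [Finset.sum_eq_single a]
    · simp
    · intro b _ hba
      simp only [Polynomial.coeff_C_mul, Polynomial.coeff_X_pow]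
      have : ¬ ((a : ℕ) = (b : ℕ)) := fun h => hba (Fin.ext h.symm)
      simp [this]
    · simp
  have hQpne : Qp ≠ 0 := by
    obtain ⟨a, ha⟩ := Function.ne_iff.mp hvne
    intro h
    apply ha
    rw [← hQpcoeff a, h]
    simp
  set R : ℚ[X] := Qp * (Polynomial.X + 1) ^ t with hR
  have hRne : R ≠ 0 := by
    refine mul_ne_zero hQpne (pow_ne_zero _ ?_)
    intro h
    have := congrArg (fun P => Polynomial.coeff P 0) h
    simp at this
  have hRdvd : (Polynomial.X + 1 : ℚ[X]) ^ t ∣ R := Dvd.intro_left _ rfl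
  -- coefficient formula
  have hRcoeff : ∀ m : ℕ, R.coeff m
      = ∑ a : Fin n, vv a * (if (a : ℕ) ≤ m then (t.choose (m - (a : ℕ)) : ℚ) else 0) := by
    intro m
    rw [hR, hQp, Finset.sum_mul, Polynomial.finset_sum_coeff]
    refine Finset.sum_congr rfl ?_
    intro a _
    rw [mul_assoc, Polynomial.coeff_C_mul]
    congr 1
    by_cases hle : (a : ℕ) ≤ m
    · have h3 : ((Polynomial.X:ℚ[X]) ^ (a:ℕ) * (Polynomial.X+1)^t).coeff m
          = ((Polynomial.X+1:ℚ[X])^t).coeff (m - (a:ℕ)) := by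
        conv_lhs => rw [show m = (m - (a:ℕ)) + (a:ℕ) by omega]
        exact Polynomial.coeff_X_pow_mul _ _ _
      rw [if_pos hle, h3, Polynomial.coeff_X_add_one_pow]
    · rw [if_neg hle]
      have hdvd : (Polynomial.X : ℚ[X]) ^ (a:ℕ) ∣ Polynomial.X ^ (a:ℕ) * (Polynomial.X + 1) ^ t :=
        Dvd.intro _ rfl
      exact Polynomial.X_pow_dvd_iff.mp hdvd m (by omega)
  -- window of zero coefficients
  have hwin : ∀ m : ℕ, p ≤ m → m ≤ d - 1 → R.coeff m = 0 := by
    intro m hm1 hm2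
    have hc : d - 1 - m < n := by omega
    have hvm' := congrFun hvm ⟨d - 1 - m, hc⟩
    rw [Matrix.vecMul, dotProduct] at hvm'
    simp only [Pi.zero_apply] at hvm'
    have hval : ∀ aa : Fin n, Mq aa ⟨d - 1 - m, hc⟩ = ((binomZ t ((m : ℤ) - ((aa:ℕ):ℤ))) : ℚ) := by
      intro aa
      simp only [hMq, RingHom.mapMatrix_apply, Matrix.map_apply, Cmat, Matrix.of_apply]
      have harg : (d:ℤ) - 1 - ((aa:ℕ):ℤ) - ((d - 1 - m : ℕ):ℤ) = (m:ℤ) - ((aa:ℕ):ℤ) := by omega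
      rw [harg, Int.coe_castRingHom]
    rw [hRcoeff m]
    refine Eq.trans ?_ hvm'
    refine Finset.sum_congr rfl ?_
    intro a _
    rw [hval a]
    congr 1
    rw [binomZ]
    by_cases hle : (a : ℕ) ≤ m
    · rw [if_pos hle, if_pos (by omega)]
      have : ((m:ℤ) - ((a:ℕ):ℤ)).toNat = m - (a:ℕ) := by omega
      rw [this]
      norm_num
    · rw [if_neg hle, if_neg (by omega)]
      simp
  -- support bound
  have hdegR : R.natDegree < t + n := by
    have h1 : Qp.natDegree ≤ n - 1 := by
      rw [hQp]
      refine le_trans (Polynomial.natDegree_sum_le _ _) ?_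
      rw [Finset.fold_max_le]
      refine ⟨by omega, ?_⟩
      intro a _
      refine le_trans (Polynomial.natDegree_C_mul_X_pow_le _ _) (by omega)
    have hXdeg : ((Polynomial.X : ℚ[X]) + 1).natDegree = 1 := by
      simpa using Polynomial.natDegree_X_add_C (1 : ℚ)
    have h2 : ((Polynomial.X + 1 : ℚ[X]) ^ t).natDegree = t := by
      rw [Polynomial.natDegree_pow, hXdeg, mul_one]
    have h3 := Polynomial.natDegree_mul_le (p := Qp) (q := (Polynomial.X + 1) ^ t)
    rw [← hR, h2] at h3
    omega
  have hsupp : R.support ⊆ Finset.range (t + n) \ Finset.Ico p d := by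
    intro m hm
    rw [Polynomial.mem_support_iff] at hm
    rw [Finset.mem_sdiff, Finset.mem_range, Finset.mem_Ico]
    constructor
    · by_contra hlt
      exact hm (Polynomial.coeff_eq_zero_of_natDegree_lt (by omega))
    · rintro ⟨h1, h2⟩
      exact hm (hwin m h1 (by omega))
  have hcard : R.support.card ≤ t := by
    refine le_trans (Finset.card_le_card hsupp) ?_
    rw [Finset.card_sdiff_of_subset (by intro z hz; simp only [Finset.mem_Ico] at hz; simp only [Finset.mem_range]; omega)]
    simp only [Nat.card_Ico, Finset.card_range]
    omega
  exact sparse_not_dvd t R hRne hcard hRdvd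

lemma isUnit_det_Cmat0 (t d : ℕ) : IsUnit (Cmat t 0 d).det := by
  have key := Matrix.det_permute (Fin.revPerm : Equiv.Perm (Fin (d - 0))) (Cmat t 0 d)
  have htri : (((Cmat t 0 d).submatrix (⇑(Fin.revPerm : Equiv.Perm (Fin (d - 0)))) id)).det = 1 := by
    rw [Matrix.det_of_lowerTriangular]
    · refine Finset.prod_eq_one ?_
      intro a _
      simp only [Matrix.submatrix_apply, id_eq, Cmat, Matrix.of_apply, Fin.revPerm_apply]
      have harg : (d : ℤ) - 1 - ((Fin.rev a : Fin (d-0)) : ℕ) - ((a : ℕ) : ℤ) = 0 := by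
        have := Fin.val_rev a
        have ha := a.isLt
        omega
      rw [harg, binomZ]
      simp
    · intro a b hab
      simp only [OrderDual.toDual_lt_toDual] at hab
      simp only [Matrix.submatrix_apply, id_eq, Cmat, Matrix.of_apply, Fin.revPerm_apply]
      have harg : (d : ℤ) - 1 - ((Fin.rev a : Fin (d-0)) : ℕ) - ((b : ℕ) : ℤ) < 0 := by
        have := Fin.val_rev a
        have ha := a.isLt
        have hb := b.isLt
        have : (a : ℕ) < (b : ℕ) := hab
        omega
      rw [binomZ, if_neg (by omega)]
  rw [htri] at key
  rcases Int.units_eq_one_or (Equiv.Perm.sign (Fin.revPerm : Equiv.Perm (Fin (d-0)))) with h | h <;>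
      rw [h] at key <;> norm_num at key
  · rw [← key]; exact isUnit_one
  · have hdet : (Cmat t 0 d).det = -1 := by omega
    rw [hdet]
    exact IsUnit.neg isUnit_one

lemma exists_LDU {K : Type} [Field K] : ∀ (n : ℕ) (H : Matrix (Fin n) (Fin n) K),
    (∀ (m : ℕ) (h : m ≤ n), 0 < m → (H.submatrix (Fin.castLE h) (Fin.castLE h)).det ≠ 0) →
    ∃ L Dg U : Matrix (Fin n) (Fin n) K,
      (∀ a, L a a = 1) ∧ (∀ a b, a < b → L a b = 0) ∧
      (∀ a, U a a = 1) ∧ (∀ a b : Fin n, b < a → U a b = 0) ∧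
      (∀ a, Dg a a ≠ 0) ∧ (∀ a b, a ≠ b → Dg a b = 0) ∧ H = L * Dg * U := by
  intro n
  induction n with
  | zero =>
    intro H _
    refine ⟨1, 1, 1, ?_, ?_, ?_, ?_, ?_, ?_, ?_⟩ <;>
      first
        | (intro a; exact a.elim0)
        | (intro a b; exact a.elim0)
        | (ext a b; exact a.elim0)
  | succ n ih =>
    intro H hm
    set G : Matrix (Fin n) (Fin n) K :=
      H.submatrix (Fin.castLE (Nat.le_succ n)) (Fin.castLE (Nat.le_succ n)) with hG
    have hGm : ∀ (m : ℕ) (h : m ≤ n), 0 < m →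
        (G.submatrix (Fin.castLE h) (Fin.castLE h)).det ≠ 0 := by
      intro m h hpos
      have hcomp : G.submatrix (Fin.castLE h) (Fin.castLE h)
          = H.submatrix (Fin.castLE (h.trans (Nat.le_succ n))) (Fin.castLE (h.trans (Nat.le_succ n))) := by
        ext r c
        simp [hG, Matrix.submatrix_apply]
      rw [hcomp]
      exact hm m (h.trans (Nat.le_succ n)) hpos
    obtain ⟨L₀, Dg₀, U₀, hL₀d, hL₀t, hU₀d, hU₀t, hDg₀d, hDg₀o, hfac⟩ := ih G hGm
    -- determinant facts
    have hsubid : H.submatrix (Fin.castLE (le_refl (n+1))) (Fin.castLE (le_refl (n+1))) = H := by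
      ext r c
      congr 1 <;> exact Fin.ext (by simp)
    have hHdet : H.det ≠ 0 := by
      have := hm (n+1) (le_refl _) (Nat.succ_pos n)
      rwa [hsubid] at this
    have hGdet : G.det ≠ 0 := by
      rcases Nat.eq_zero_or_pos n with h0 | hpos
      · subst h0
        rw [Matrix.det_fin_zero]
        exact one_ne_zero
      · exact hm n (Nat.le_succ n) hpos
    have hdetfac : G.det = L₀.det * Dg₀.det * U₀.det := by
      rw [hfac, Matrix.det_mul, Matrix.det_mul]
    have hLD : IsUnit (L₀ * Dg₀).det := by
      rw [Matrix.det_mul, isUnit_iff_ne_zero]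
      intro h
      apply hGdet
      rw [hdetfac]
      rcases mul_eq_zero.mp h with h | h <;> rw [h] <;> ring
    have hDU : IsUnit (Dg₀ * U₀).det := by
      rw [Matrix.det_mul, isUnit_iff_ne_zero]
      intro h
      apply hGdet
      rw [hdetfac]
      rcases mul_eq_zero.mp h with h | h <;> rw [h] <;> ring
    -- blocks
    set e : Fin n ⊕ Fin 1 ≃ Fin (n+1) := finSumFinEquiv with he
    set bb : Matrix (Fin n) (Fin 1) K := fun r _ => H (Fin.castLE (Nat.le_succ n) r) (Fin.last n) with hbb
    set cc : Matrix (Fin 1) (Fin n) K := fun _ j => H (Fin.last n) (Fin.castLE (Nat.le_succ n) j) with hcc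
    set h11 : Matrix (Fin 1) (Fin 1) K := fun _ _ => H (Fin.last n) (Fin.last n) with hh11
    set uu : Matrix (Fin n) (Fin 1) K := (L₀ * Dg₀)⁻¹ * bb with huu
    set ll : Matrix (Fin 1) (Fin n) K := cc * (Dg₀ * U₀)⁻¹ with hll
    set dd : Matrix (Fin 1) (Fin 1) K := h11 - ll * Dg₀ * uu with hdd
    have heq1 : (L₀ * Dg₀) * uu = bb := by
      rw [huu, ← Matrix.mul_assoc, Matrix.mul_nonsing_inv _ hLD, Matrix.one_mul]
    have heq2 : ll * (Dg₀ * U₀) = cc := by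
      rw [hll, Matrix.mul_assoc, Matrix.nonsing_inv_mul _ hDU, Matrix.mul_one]
    -- the block identity
    have hHblocks : H.submatrix ⇑e ⇑e = Matrix.fromBlocks G bb cc h11 := by
      ext i j
      rcases i with i | i <;> rcases j with j | j <;>
        · simp only [Matrix.submatrix_apply, Matrix.fromBlocks_apply₁₁, Matrix.fromBlocks_apply₁₂,
            Matrix.fromBlocks_apply₂₁, Matrix.fromBlocks_apply₂₂, he, finSumFinEquiv_apply_left,
            finSumFinEquiv_apply_right, hbb, hcc, hh11, hG]
          congr 1 <;> exact Fin.ext (by simp [Fin.ext_iff])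
    set Lb : Matrix (Fin n ⊕ Fin 1) (Fin n ⊕ Fin 1) K := Matrix.fromBlocks L₀ 0 ll 1 with hLb
    set Db : Matrix (Fin n ⊕ Fin 1) (Fin n ⊕ Fin 1) K := Matrix.fromBlocks Dg₀ 0 0 dd with hDb
    set Ub : Matrix (Fin n ⊕ Fin 1) (Fin n ⊕ Fin 1) K := Matrix.fromBlocks U₀ uu 0 1 with hUb
    have hblockfac : Matrix.fromBlocks G bb cc h11 = Lb * Db * Ub := by
      rw [hLb, hDb, hUb, Matrix.fromBlocks_multiply, Matrix.fromBlocks_multiply]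
      simp only [Matrix.mul_zero, Matrix.zero_mul, Matrix.mul_one, Matrix.one_mul,
        add_zero, zero_add, Matrix.mul_zero, Matrix.zero_mul]
      rw [heq1, show ll * Dg₀ * U₀ = cc from by rw [Matrix.mul_assoc, heq2],
        show ll * Dg₀ * uu + dd = h11 from by rw [hdd]; abel, ← hfac]
    have hdetHb : (Matrix.fromBlocks G bb cc h11).det = H.det := by
      rw [← hHblocks]
      exact Matrix.det_submatrix_equiv_self e H
    have hdd0 : dd 0 0 ≠ 0 := by
      intro h0
      have hdetdd : dd.det = 0 := by rw [Matrix.det_fin_one, h0]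
      have hfb : (Matrix.fromBlocks G bb cc h11).det = Lb.det * (Dg₀.det * dd.det) * Ub.det := by
        rw [hblockfac, Matrix.det_mul, Matrix.det_mul, hDb, Matrix.det_fromBlocks_zero₂₁]
      apply hHdet
      rw [← hdetHb, hfb, hdetdd]
      ring
    have hsplit : ∀ a : Fin (n+1),
        (∃ i : Fin n, e.symm a = Sum.inl i ∧ (a : ℕ) = (i : ℕ)) ∨
        (e.symm a = Sum.inr 0 ∧ (a : ℕ) = n) := by
      intro a
      rcases lt_or_ge (a : ℕ) n with h | h
      · refine Or.inl ⟨⟨(a : ℕ), h⟩, ?_, rfl⟩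
        rw [Equiv.symm_apply_eq, he, finSumFinEquiv_apply_left]
        exact Fin.ext (by simp)
      · refine Or.inr ⟨?_, by have := a.isLt; omega⟩
        rw [Equiv.symm_apply_eq, he, finSumFinEquiv_apply_right]
        refine Fin.ext ?_
        have := a.isLt
        simp only [Fin.natAdd]
        simp
        omega
    refine ⟨Lb.submatrix ⇑e.symm ⇑e.symm, Db.submatrix ⇑e.symm ⇑e.symm,
      Ub.submatrix ⇑e.symm ⇑e.symm, ?_, ?_, ?_, ?_, ?_, ?_, ?_⟩
    · intro a
      simp only [Matrix.submatrix_apply]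
      rcases hsplit a with ⟨i, hi, _⟩ | ⟨hi, _⟩ <;> rw [hi, hLb]
      · exact hL₀d i
      · simp [Matrix.one_apply]
    · intro a b hab
      simp only [Matrix.submatrix_apply]
      rcases hsplit a with ⟨i, hi, hvi⟩ | ⟨hi, hvi⟩ <;>
        rcases hsplit b with ⟨j, hj, hvj⟩ | ⟨hj, hvj⟩ <;> rw [hi, hj, hLb]
      · refine hL₀t i j ?_
        rw [Fin.lt_def] at hab ⊢
        omega
      · simp
      · exfalso
        rw [Fin.lt_def] at hab
        have := j.isLt
        omega
      · exfalso
        rw [Fin.lt_def] at hab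
        omega
    · intro a
      simp only [Matrix.submatrix_apply]
      rcases hsplit a with ⟨i, hi, _⟩ | ⟨hi, _⟩ <;> rw [hi, hUb]
      · exact hU₀d i
      · simp [Matrix.one_apply]
    · intro a b hab
      simp only [Matrix.submatrix_apply]
      rcases hsplit a with ⟨i, hi, hvi⟩ | ⟨hi, hvi⟩ <;>
        rcases hsplit b with ⟨j, hj, hvj⟩ | ⟨hj, hvj⟩ <;> rw [hi, hj, hUb]
      · refine hU₀t i j ?_
        rw [Fin.lt_def] at hab ⊢
        omega
      · exfalso
        rw [Fin.lt_def] at hab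
        have := i.isLt
        omega
      · simp
      · exfalso
        rw [Fin.lt_def] at hab
        omega
    · intro a
      simp only [Matrix.submatrix_apply]
      rcases hsplit a with ⟨i, hi, _⟩ | ⟨hi, _⟩ <;> rw [hi, hDb]
      · exact hDg₀d i
      · exact hdd0
    · intro a b hab
      simp only [Matrix.submatrix_apply]
      rcases hsplit a with ⟨i, hi, hvi⟩ | ⟨hi, hvi⟩ <;>
        rcases hsplit b with ⟨j, hj, hvj⟩ | ⟨hj, hvj⟩ <;> rw [hi, hj, hDb]
      · refine hDg₀o i j ?_
        intro h
        exact hab (Fin.ext (by rw [hvi, hvj, h]))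
      · simp
      · simp
      · exfalso
        exact hab (Fin.ext (by omega))
    · have hmul : Lb.submatrix ⇑e.symm ⇑e.symm * Db.submatrix ⇑e.symm ⇑e.symm
          * Ub.submatrix ⇑e.symm ⇑e.symm = (Lb * Db * Ub).submatrix ⇑e.symm ⇑e.symm := by
        rw [Matrix.submatrix_mul_equiv Lb Db _ e.symm _,
          Matrix.submatrix_mul_equiv (Lb * Db) Ub _ e.symm _]
      rw [hmul, ← hblockfac, ← hHblocks, Matrix.submatrix_submatrix, Equiv.self_comp_symm,
        Matrix.submatrix_id_id]

/-- the matrix of multiplication by `(φℓbar + x)^t` on tuples -/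
noncomputable def Mop {B' : Type} [CommRing B'] (ℓbar : B') (t : ℕ) {d : ℕ} (f : Fin d → B') :
    Fin d → B' := fun r =>
  ∑ q : Fin d, if (q : ℕ) ≤ (r : ℕ) then
    (t.choose ((r : ℕ) - (q : ℕ))) • (ℓbar ^ (t - ((r : ℕ) - (q : ℕ))) * f q) else 0


section TriOp

variable {k B : Type} [Field k] [CommRing B] [Algebra k B]

variable {d : ℕ}

/-- strictly upper triangular operator built from scalars `c` and powers of `ℓbar` -/
noncomputable def triN (ℓbar : B) (c : Fin d → Fin d → k) : (Fin d → B) →ₗ[k] (Fin d → B) where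
  toFun f a := ∑ b : Fin d, if a < b then c a b • (ℓbar ^ ((b : ℕ) - (a : ℕ)) * f b) else 0
  map_add' f g := by
    funext a
    simp only [Pi.add_apply, ← Finset.sum_add_distrib]
    refine Finset.sum_congr rfl fun b _ => ?_
    split_ifs with h
    · rw [mul_add, smul_add]
    · rw [add_zero]
  map_smul' z f := by
    funext a
    simp only [Pi.smul_apply, RingHom.id_apply, Finset.smul_sum]
    refine Finset.sum_congr rfl fun b _ => ?_
    split_ifs with h
    · rw [mul_smul_comm, smul_comm]
    · rw [smul_zero]

lemma triN_pow_support (ℓbar : B) (c : Fin d → Fin d → k) :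
    ∀ (j : ℕ) (f : Fin d → B) (a : Fin d), d ≤ (a : ℕ) + j → ((triN ℓbar c) ^ j) f a = 0 := by
  intro j
  induction j with
  | zero => intro f a ha; exact absurd a.isLt (by omega)
  | succ j ih =>
    intro f a ha
    rw [pow_succ']
    show (triN ℓbar c) (((triN ℓbar c) ^ j) f) a = 0
    show (∑ b : Fin d, if a < b then
      c a b • (ℓbar ^ ((b : ℕ) - (a : ℕ)) * ((triN ℓbar c ^ j) f) b) else 0) = 0
    refine Finset.sum_eq_zero fun b _ => ?_
    split_ifs with h
    · rw [ih f b (by rw [Fin.lt_def] at h; omega), mul_zero, smul_zero]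
    · rfl

lemma triN_pow_d (ℓbar : B) (c : Fin d → Fin d → k) : (triN ℓbar c) ^ d = 0 := by
  refine LinearMap.ext fun f => funext fun a => ?_
  exact triN_pow_support ℓbar c d f a (by omega)

lemma inv_of_nilp {R : Type} [Ring R] (x : R) (n : ℕ) (hx : x ^ n = 0) :
    (∑ j ∈ Finset.range n, (-x) ^ j) * (1 + x) = 1 ∧
    (1 + x) * (∑ j ∈ Finset.range n, (-x) ^ j) = 1 := by
  have hz : (-x) ^ n = 0 := by rw [neg_pow, hx, mul_zero]
  have h1 := geom_sum_mul (-x) n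
  have h2 := mul_geom_sum (-x) n
  rw [hz, zero_sub] at h1 h2
  constructor
  · have e1 : (∑ j ∈ Finset.range n, (-x) ^ j) * (1 + x)
        = -((∑ j ∈ Finset.range n, (-x) ^ j) * (-x - 1)) := by noncomm_ring
    rw [e1, h1, neg_neg]
  · have e2 : (1 + x) * (∑ j ∈ Finset.range n, (-x) ^ j)
        = -((-x - 1) * (∑ j ∈ Finset.range n, (-x) ^ j)) := by noncomm_ring
    rw [e2, h2, neg_neg]

noncomputable def triInv (ℓbar : B) (c : Fin d → Fin d → k) : (Fin d → B) →ₗ[k] (Fin d → B) :=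
  ∑ j ∈ Finset.range d, (-(triN ℓbar c)) ^ j

lemma triInv_mul (ℓbar : B) (c : Fin d → Fin d → k) :
    (triInv ℓbar c) * (1 + triN ℓbar c) = 1 :=
  (inv_of_nilp (triN ℓbar c) d (triN_pow_d ℓbar c)).1

lemma mul_triInv (ℓbar : B) (c : Fin d → Fin d → k) :
    (1 + triN ℓbar c) * (triInv ℓbar c) = 1 :=
  (inv_of_nilp (triN ℓbar c) d (triN_pow_d ℓbar c)).2

variable (𝒜 : ℤ → Submodule k B)

lemma triN_mem (ℓbar : B) (c : Fin d → Fin d → k) (deg : Fin d → ℤ)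
    (hmul : ∀ (e : ℕ) (m : ℤ) (y : B), y ∈ 𝒜 m → ℓbar ^ e * y ∈ 𝒜 ((e : ℤ) + m))
    (hdeg : ∀ a b : Fin d, a < b → (((b : ℕ) - (a : ℕ) : ℕ) : ℤ) + deg b = deg a)
    (f : Fin d → B) (hf : ∀ a, f a ∈ 𝒜 (deg a)) :
    ∀ a, (triN ℓbar c) f a ∈ 𝒜 (deg a) := by
  intro a
  show (∑ b : Fin d, if a < b then c a b • (ℓbar ^ ((b : ℕ) - (a : ℕ)) * f b) else 0) ∈ 𝒜 (deg a)
  refine Submodule.sum_mem _ fun b _ => ?_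
  split_ifs with h
  · refine Submodule.smul_mem _ _ ?_
    have := hmul ((b : ℕ) - (a : ℕ)) (deg b) (f b) (hf b)
    rwa [hdeg a b h] at this
  · exact Submodule.zero_mem _

lemma triNeg_pow_mem (ℓbar : B) (c : Fin d → Fin d → k) (deg : Fin d → ℤ)
    (hmul : ∀ (e : ℕ) (m : ℤ) (y : B), y ∈ 𝒜 m → ℓbar ^ e * y ∈ 𝒜 ((e : ℤ) + m))
    (hdeg : ∀ a b : Fin d, a < b → (((b : ℕ) - (a : ℕ) : ℕ) : ℤ) + deg b = deg a)
    (j : ℕ) (f : Fin d → B) (hf : ∀ a, f a ∈ 𝒜 (deg a)) :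
    ∀ a, ((-(triN ℓbar c)) ^ j) f a ∈ 𝒜 (deg a) := by
  induction j generalizing f with
  | zero => simpa using hf
  | succ j ih =>
    rw [pow_succ]
    intro a
    show ((-(triN ℓbar c)) ^ j * (-(triN ℓbar c))) f a ∈ 𝒜 (deg a)
    show ((-(triN ℓbar c)) ^ j) ((-(triN ℓbar c)) f) a ∈ 𝒜 (deg a)
    refine ih _ ?_ a
    intro a'
    rw [LinearMap.neg_apply, Pi.neg_apply]
    exact Submodule.neg_mem _ (triN_mem 𝒜 ℓbar c deg hmul hdeg f hf a')

lemma triInv_mem (ℓbar : B) (c : Fin d → Fin d → k) (deg : Fin d → ℤ)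
    (hmul : ∀ (e : ℕ) (m : ℤ) (y : B), y ∈ 𝒜 m → ℓbar ^ e * y ∈ 𝒜 ((e : ℤ) + m))
    (hdeg : ∀ a b : Fin d, a < b → (((b : ℕ) - (a : ℕ) : ℕ) : ℤ) + deg b = deg a)
    (f : Fin d → B) (hf : ∀ a, f a ∈ 𝒜 (deg a)) :
    ∀ a, (triInv ℓbar c) f a ∈ 𝒜 (deg a) := by
  intro a
  rw [triInv, LinearMap.coe_sum, Finset.sum_apply, Finset.sum_apply]
  exact Submodule.sum_mem _ fun j _ => triNeg_pow_mem 𝒜 ℓbar c deg hmul hdeg j f hf a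

end TriOp

section Ext

variable {k B A : Type} [Field k] [CommRing B] [Algebra k B] [CommRing A] [Algebra k A]

/-- the embedding of a tuple into `A` -/
noncomputable def Emap (φ : B →ₐ[k] A) (x : A) {d : ℕ} (f : Fin d → B) : A :=
  ∑ q : Fin d, x ^ (q : ℕ) * φ (f q)

lemma Emap_sub (φ : B →ₐ[k] A) (x : A) {d : ℕ} (f g : Fin d → B) :
    Emap φ x (f - g) = Emap φ x f - Emap φ x g := by
  rw [Emap, Emap, Emap, ← Finset.sum_sub_distrib]
  refine Finset.sum_congr rfl fun q _ => ?_
  rw [Pi.sub_apply, map_sub, mul_sub]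

lemma Emap_zero (φ : B →ₐ[k] A) (x : A) {d : ℕ} :
    Emap φ x (0 : Fin d → B) = 0 := by
  rw [Emap]
  refine Finset.sum_eq_zero fun q _ => ?_
  simp

lemma mul_pow_Emap (φ : B →ₐ[k] A) (x : A) {d : ℕ} (hx : x ^ d = 0) (hd : 1 ≤ d)
    (ℓbar : B) (t : ℕ) (ht : d - 1 ≤ t) (f : Fin d → B) :
    (φ ℓbar + x) ^ t * Emap φ x f = Emap φ x (Mop ℓbar t f) := by
  have hxe : ∀ e, d ≤ e → x ^ e = 0 := by
    intro e he
    rw [show e = d + (e - d) by omega, pow_add, hx, zero_mul]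
  rw [add_pow, Emap, Finset.sum_mul]
  -- LHS: ∑ jj ∑ q
  have lhs_eq : ∀ jj ∈ Finset.range (t + 1),
      (φ ℓbar ^ jj * x ^ (t - jj) * ((t.choose jj : ℕ) : A)) * (∑ q : Fin d, x ^ (q : ℕ) * φ (f q))
      = ∑ q : Fin d, (t.choose jj) • (x ^ ((t - jj) + (q : ℕ)) * φ (ℓbar ^ jj * f q)) := by
    intro jj _
    rw [Finset.mul_sum]
    refine Finset.sum_congr rfl fun q _ => ?_
    rw [map_mul, map_pow, pow_add, nsmul_eq_mul]
    push_cast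
    ring
  rw [Finset.sum_congr rfl lhs_eq, Finset.sum_comm]
  -- RHS
  rw [Emap]
  simp only [Mop]
  have rhs_eq : ∀ q : Fin d, (∑ r : Fin d, x ^ (r : ℕ) * φ (if (q : ℕ) ≤ (r : ℕ) then
        (t.choose ((r : ℕ) - (q : ℕ))) • (ℓbar ^ (t - ((r : ℕ) - (q : ℕ))) * f q) else 0))
      = ∑ jj ∈ Finset.range (t + 1), (t.choose jj) • (x ^ ((t - jj) + (q : ℕ)) * φ (ℓbar ^ jj * f q)) := by
    intro q
    have h1 : (∑ r : Fin d, x ^ (r : ℕ) * φ (if (q : ℕ) ≤ (r : ℕ) then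
          (t.choose ((r : ℕ) - (q : ℕ))) • (ℓbar ^ (t - ((r : ℕ) - (q : ℕ))) * f q) else 0))
        = ∑ r ∈ Finset.range d, x ^ r * φ (if (q : ℕ) ≤ r then
          (t.choose (r - (q : ℕ))) • (ℓbar ^ (t - (r - (q : ℕ))) * f q) else 0) :=
      Fin.sum_univ_eq_sum_range (fun r => x ^ r * φ (if (q : ℕ) ≤ r then
          (t.choose (r - (q : ℕ))) • (ℓbar ^ (t - (r - (q : ℕ))) * f q) else 0)) d
    rw [h1]
    have hss : Finset.Icc (q : ℕ) (d - 1) ⊆ Finset.range d := by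
      intro r hr
      rw [Finset.mem_Icc] at hr
      rw [Finset.mem_range]
      omega
    have hz : ∀ r ∈ Finset.range d, r ∉ Finset.Icc (q : ℕ) (d - 1) →
        x ^ r * φ (if (q : ℕ) ≤ r then
          (t.choose (r - (q : ℕ))) • (ℓbar ^ (t - (r - (q : ℕ))) * f q) else 0) = 0 := by
      intro r hr1 hr2
      rw [Finset.mem_range] at hr1
      rw [Finset.mem_Icc, not_and_or, not_le, not_le] at hr2
      rw [if_neg (by omega)]
      simp
    have h2 : ∑ r ∈ Finset.range d, x ^ r * φ (if (q : ℕ) ≤ r then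
          (t.choose (r - (q : ℕ))) • (ℓbar ^ (t - (r - (q : ℕ))) * f q) else 0)
        = ∑ r ∈ Finset.Icc (q : ℕ) (d - 1), (t.choose (r - (q : ℕ)))
            • (x ^ r * φ (ℓbar ^ (t - (r - (q : ℕ))) * f q)) := by
      rw [← Finset.sum_subset hss hz]
      refine Finset.sum_congr rfl fun r hr => ?_
      rw [Finset.mem_Icc] at hr
      rw [if_pos (by omega), map_nsmul, mul_smul_comm]
    rw [h2]
    -- bijection between Icc q (d-1) and Icc (t+q-(d-1)) t, r ↦ t + q - r
    have hss3 : Finset.Icc (t + (q : ℕ) - (d - 1)) t ⊆ Finset.range (t + 1) := by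
      intro jj hjj
      rw [Finset.mem_Icc] at hjj
      rw [Finset.mem_range]
      omega
    have hz3 : ∀ jj ∈ Finset.range (t + 1), jj ∉ Finset.Icc (t + (q : ℕ) - (d - 1)) t →
        (t.choose jj) • (x ^ ((t - jj) + (q : ℕ)) * φ (ℓbar ^ jj * f q)) = 0 := by
      intro jj h1' h2'
      rw [Finset.mem_range] at h1'
      rw [Finset.mem_Icc, not_and_or, not_le, not_le] at h2'
      have hq := q.isLt
      rw [hxe ((t - jj) + (q : ℕ)) (by omega), zero_mul, smul_zero]
    have h3 : ∑ jj ∈ Finset.range (t+1), (t.choose jj) • (x ^ ((t - jj) + (q : ℕ)) * φ (ℓbar ^ jj * f q))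
        = ∑ jj ∈ Finset.Icc (t + (q : ℕ) - (d - 1)) t,
            (t.choose jj) • (x ^ ((t - jj) + (q : ℕ)) * φ (ℓbar ^ jj * f q)) :=
      (Finset.sum_subset hss3 hz3).symm
    rw [h3]
    refine Finset.sum_nbij' (fun r => t + (q : ℕ) - r) (fun jj => t + (q : ℕ) - jj) ?_ ?_ ?_ ?_ ?_
    · intro r hr
      simp only [Finset.mem_Icc] at hr ⊢
      have hq := q.isLt
      omega
    · intro jj hjj
      simp only [Finset.mem_Icc] at hjj ⊢
      have hq := q.isLt
      omega
    · intro r hr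
      simp only [Finset.mem_Icc] at hr
      beta_reduce
      omega
    · intro jj hjj
      simp only [Finset.mem_Icc] at hjj
      have hq := q.isLt
      beta_reduce
      omega
    · intro r hr
      simp only [Finset.mem_Icc] at hr
      beta_reduce
      have e2 : t.choose (r - (q : ℕ)) = t.choose (t + (q : ℕ) - r) := by
        rw [show t + (q : ℕ) - r = t - (r - (q : ℕ)) by omega]
        exact (Nat.choose_symm (by omega)).symm
      have e4 : t - (r - (q : ℕ)) = t + (q : ℕ) - r := by omega
      have e5 : (t - (t + (q : ℕ) - r)) + (q : ℕ) = r := by omega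
      rw [e2, e4, e5]
  have hexp : (∑ r : Fin d, x ^ (r : ℕ) * φ (∑ q : Fin d, if (q : ℕ) ≤ (r : ℕ) then
        (t.choose ((r : ℕ) - (q : ℕ))) • (ℓbar ^ (t - ((r : ℕ) - (q : ℕ))) * f q) else 0))
      = ∑ q : Fin d, ∑ r : Fin d, x ^ (r : ℕ) * φ (if (q : ℕ) ≤ (r : ℕ) then
        (t.choose ((r : ℕ) - (q : ℕ))) • (ℓbar ^ (t - ((r : ℕ) - (q : ℕ))) * f q) else 0) := by
    refine Eq.trans (Finset.sum_congr rfl fun r _ => ?_) Finset.sum_comm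
    rw [map_sum, Finset.mul_sum]
  rw [hexp]
  exact Finset.sum_congr rfl fun q _ => (rhs_eq q).symm

end Ext

section Fact

variable {k B : Type} [Field k] [CommRing B] [Algebra k B]

def Hkmat (k : Type) [Field k] (t d : ℕ) : Matrix (Fin d) (Fin d) k :=
  Matrix.of fun a c => ((binomZ t ((d : ℤ) - 1 - ((a : ℕ) : ℤ) - ((c : ℕ) : ℤ)) : ℤ) : k)

noncomputable def Vfun (ℓbar : B) {d : ℕ} (U : Matrix (Fin d) (Fin d) k) (f : Fin d → B) :
    Fin d → B :=
  fun q' => ∑ q : Fin d, if q' ≤ q then U q' q • (ℓbar ^ ((q : ℕ) - (q' : ℕ)) * f q) else 0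

noncomputable def Wfun (ℓbar : B) {d : ℕ} (L : Matrix (Fin d) (Fin d) k) (g : Fin d → B) :
    Fin d → B :=
  fun r => ∑ r' : Fin d, if r ≤ r' then
    L (Fin.rev r) (Fin.rev r') • (ℓbar ^ ((r' : ℕ) - (r : ℕ)) * g r') else 0

noncomputable def Dfun (ℓbar : B) {d : ℕ} (Dg : Matrix (Fin d) (Fin d) k) (t : ℕ)
    (f : Fin d → B) : Fin d → B :=
  fun r => Dg (Fin.rev r) (Fin.rev r) •
    (ℓbar ^ ((t - (d - 1)) + 2 * ((Fin.rev r : Fin d) : ℕ)) * f (Fin.rev r))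

lemma smul_pow_chain (ℓbar y : B) (α β γ : k) (a b c : ℕ) :
    α • (ℓbar ^ a * (β • (ℓbar ^ b * (γ • (ℓbar ^ c * y)))))
    = (α * β * γ) • (ℓbar ^ (a + b + c) * y) := by
  have h1 : ℓbar ^ a * (ℓbar ^ b * (ℓbar ^ c * y)) = ℓbar ^ (a + b + c) * y := by
    rw [pow_add, pow_add]
    ring
  rw [mul_smul_comm γ, smul_smul, mul_smul_comm (β * γ), smul_smul, h1, mul_assoc α β γ]

lemma Mop_factor {d : ℕ} (hd : 1 ≤ d) (ℓbar : B) (t : ℕ) (ht : d - 1 ≤ t)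
    (L Dg U : Matrix (Fin d) (Fin d) k)
    (hLt : ∀ a b : Fin d, a < b → L a b = 0)
    (hUt : ∀ a b : Fin d, b < a → U a b = 0)
    (hDgo : ∀ a b : Fin d, a ≠ b → Dg a b = 0)
    (hLDU : L * Dg * U = Hkmat k t d)
    (f : Fin d → B) : Mop ℓbar t f = Wfun ℓbar L (Dfun ℓbar Dg t (Vfun ℓbar U f)) := by
  have hentry : ∀ a c0 : Fin d, (∑ j : Fin d, L a j * Dg j j * U j c0) = Hkmat k t d a c0 := by
    intro a c0
    rw [← hLDU, Matrix.mul_apply]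
    refine Finset.sum_congr rfl fun j _ => ?_
    rw [Matrix.mul_apply, Finset.sum_mul, Finset.sum_eq_single j]
    · intro j' _ hj'
      rw [hDgo j' j hj', mul_zero, zero_mul]
    · intro h
      exact absurd (Finset.mem_univ j) h
  funext r
  have hreindex : Wfun ℓbar L (Dfun ℓbar Dg t (Vfun ℓbar U f)) r
      = ∑ j : Fin d, (if r ≤ Fin.rev j then
          L (Fin.rev r) j • (ℓbar ^ (((Fin.rev j : Fin d) : ℕ) - (r : ℕ))
            * Dfun ℓbar Dg t (Vfun ℓbar U f) (Fin.rev j)) else 0) := by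
    rw [Wfun]
    exact (Fintype.sum_equiv (Fin.revPerm : Equiv.Perm (Fin d)) _ _
      (fun j => by simp [Fin.rev_rev])).symm
  rw [hreindex]
  have hterm : ∀ j : Fin d, (if r ≤ Fin.rev j then
        L (Fin.rev r) j • (ℓbar ^ (((Fin.rev j : Fin d) : ℕ) - (r : ℕ))
          * Dfun ℓbar Dg t (Vfun ℓbar U f) (Fin.rev j)) else 0)
      = ∑ q : Fin d, (L (Fin.rev r) j * Dg j j * U j q)
          • (ℓbar ^ ((t - (r : ℕ)) + (q : ℕ)) * f q) := by
    intro j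
    have hrevj : ((Fin.rev j : Fin d) : ℕ) = d - 1 - (j : ℕ) := by
      rw [Fin.val_rev]
      omega
    have hrevr : ((Fin.rev r : Fin d) : ℕ) = d - 1 - (r : ℕ) := by
      rw [Fin.val_rev]
      omega
    split_ifs with hc1
    · -- r ≤ rev j
      have hc1' : (r : ℕ) ≤ d - 1 - (j : ℕ) := by
        rw [Fin.le_def, hrevj] at hc1
        exact hc1
      rw [Dfun]
      simp only [Fin.rev_rev]
      rw [Vfun]
      rw [Finset.mul_sum, Finset.smul_sum, Finset.mul_sum, Finset.smul_sum]
      refine Finset.sum_congr rfl fun q _ => ?_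
      by_cases hc2 : j ≤ q
      · rw [if_pos hc2]
        rw [smul_pow_chain]
        have hc2' : (j : ℕ) ≤ (q : ℕ) := hc2
        have hj := j.isLt
        have hq := q.isLt
        have hr := r.isLt
        rw [show ((Fin.rev j : Fin d) : ℕ) - (r : ℕ) + ((t - (d - 1)) + 2 * (j : ℕ))
            + ((q : ℕ) - (j : ℕ)) = t - (r : ℕ) + (q : ℕ) from by rw [hrevj]; omega]
      · rw [if_neg hc2]
        rw [hUt j q (not_le.mp hc2)]
        simp
    · -- ¬ r ≤ rev j : L (rev r) j = 0
      have : Fin.rev r < j := by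
        rw [Fin.lt_def, hrevr]
        rw [Fin.le_def, hrevj] at hc1
        have hj := j.isLt
        have hr := r.isLt
        omega
      refine (Finset.sum_eq_zero fun q _ => ?_).symm
      rw [hLt (Fin.rev r) j this, zero_mul, zero_mul, zero_smul]
  rw [Finset.sum_congr rfl (fun j _ => hterm j), Finset.sum_comm]
  rw [Mop]
  refine Finset.sum_congr rfl fun q _ => ?_
  rw [← Finset.sum_smul, hentry]
  have hrevr : ((Fin.rev r : Fin d) : ℕ) = d - 1 - (r : ℕ) := by
    rw [Fin.val_rev]; omega
  have hr := r.isLt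
  have hq := q.isLt
  by_cases hle : (q : ℕ) ≤ (r : ℕ)
  · rw [if_pos hle]
    have hHval : Hkmat k t d (Fin.rev r) q = ((t.choose ((r : ℕ) - (q : ℕ)) : ℕ) : k) := by
      rw [Hkmat]
      simp only [Matrix.of_apply, binomZ]
      rw [if_pos (by rw [hrevr]; push_cast; omega)]
      have : ((d : ℤ) - 1 - (((Fin.rev r : Fin d) : ℕ) : ℤ) - ((q : ℕ) : ℤ)).toNat
          = (r : ℕ) - (q : ℕ) := by
        rw [hrevr]; omega
      rw [this]
      push_cast
      rfl
    rw [hHval, Nat.cast_smul_eq_nsmul,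
      show t - ((r : ℕ) - (q : ℕ)) = t - (r : ℕ) + (q : ℕ) from by omega]
  · rw [if_neg hle]
    have hHval : Hkmat k t d (Fin.rev r) q = 0 := by
      rw [Hkmat]
      simp only [Matrix.of_apply, binomZ]
      rw [if_neg (by rw [hrevr]; push_cast; omega)]
      exact Int.cast_zero
    rw [hHval, zero_smul]

end Fact

section Glue

variable {k B : Type} [Field k] [CommRing B] [Algebra k B]

lemma le_sum_split {d : ℕ} (ℓbar : B) (c : Fin d → Fin d → k) (hcd : ∀ a, c a a = 1)
    (f : Fin d → B) (a : Fin d) :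
    (∑ b : Fin d, if a ≤ b then c a b • (ℓbar ^ ((b : ℕ) - (a : ℕ)) * f b) else 0)
      = f a + triN ℓbar c f a := by
  have hsplit : ∀ b : Fin d, (if a ≤ b then c a b • (ℓbar ^ ((b : ℕ) - (a : ℕ)) * f b) else 0)
      = (if b = a then c a b • (ℓbar ^ ((b : ℕ) - (a : ℕ)) * f b) else 0)
        + (if a < b then c a b • (ℓbar ^ ((b : ℕ) - (a : ℕ)) * f b) else 0) := by
    intro b
    rcases lt_trichotomy a b with h | h | h
    · rw [if_pos h.le, if_neg (by exact fun e => absurd (e ▸ h) (lt_irrefl _)), if_pos h, zero_add]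
    · subst h
      rw [if_pos le_rfl, if_pos rfl, if_neg (lt_irrefl a), add_zero]
    · rw [if_neg (not_le.mpr h), if_neg (by exact fun e => absurd (e ▸ h) (lt_irrefl _)),
        if_neg (not_lt.mpr h.le), add_zero]
  rw [Finset.sum_congr rfl (fun b _ => hsplit b), Finset.sum_add_distrib,
    Finset.sum_ite_eq' Finset.univ a _]
  have h2 : triN ℓbar c f a
      = ∑ b : Fin d, if a < b then c a b • (ℓbar ^ ((b : ℕ) - (a : ℕ)) * f b) else 0 := rfl
  rw [if_pos (Finset.mem_univ a), ← h2, hcd a]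
  simp

lemma Vfun_eq {d : ℕ} (ℓbar : B) (U : Matrix (Fin d) (Fin d) k) (hUd : ∀ a, U a a = 1)
    (f : Fin d → B) :
    Vfun ℓbar U f = (1 + triN ℓbar (fun a b => U a b)) f := by
  funext a
  rw [LinearMap.add_apply, Module.End.one_apply, Pi.add_apply]
  exact le_sum_split ℓbar (fun a b => U a b) hUd f a

lemma Wfun_eq {d : ℕ} (ℓbar : B) (L : Matrix (Fin d) (Fin d) k) (hLd : ∀ a, L a a = 1)
    (g : Fin d → B) :
    Wfun ℓbar L g = (1 + triN ℓbar (fun a b => L (Fin.rev a) (Fin.rev b))) g := by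
  funext a
  rw [LinearMap.add_apply, Module.End.one_apply, Pi.add_apply]
  exact le_sum_split ℓbar (fun a b => L (Fin.rev a) (Fin.rev b)) (fun a => hLd _) g a

end Glue

section MemLemmas

variable {k B : Type} [Field k] [CommRing B] [Algebra k B] (𝒜 : ℤ → Submodule k B)

lemma Mop_mem {d : ℕ} (hd : 1 ≤ d) (ℓbar : B) (t : ℕ) (ht : d - 1 ≤ t)
    (hmul : ∀ (e : ℕ) (m : ℤ) (y : B), y ∈ 𝒜 m → ℓbar ^ e * y ∈ 𝒜 ((e : ℤ) + m))
    (i : ℤ) (f : Fin d → B) (hf : ∀ q : Fin d, f q ∈ 𝒜 (i - ((q : ℕ) : ℤ))) :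
    ∀ r : Fin d, Mop ℓbar t f r ∈ 𝒜 (i + (t : ℤ) - ((r : ℕ) : ℤ)) := by
  intro r
  rw [Mop]
  refine Submodule.sum_mem _ fun q _ => ?_
  split_ifs with hle
  · refine nsmul_mem ?_ _
    have h1 := hmul (t - ((r : ℕ) - (q : ℕ))) (i - ((q : ℕ) : ℤ)) (f q) (hf q)
    have h2 : ((t - ((r : ℕ) - (q : ℕ)) : ℕ) : ℤ) + (i - ((q : ℕ) : ℤ))
        = i + (t : ℤ) - ((r : ℕ) : ℤ) := by
      have hr := r.isLt
      omega
    rwa [h2] at h1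
  · exact Submodule.zero_mem _

lemma Vfun_mem {d : ℕ} (ℓbar : B) (U : Matrix (Fin d) (Fin d) k)
    (hmul : ∀ (e : ℕ) (m : ℤ) (y : B), y ∈ 𝒜 m → ℓbar ^ e * y ∈ 𝒜 ((e : ℤ) + m))
    (i : ℤ) (f : Fin d → B) (hf : ∀ q : Fin d, f q ∈ 𝒜 (i - ((q : ℕ) : ℤ))) :
    ∀ q' : Fin d, Vfun ℓbar U f q' ∈ 𝒜 (i - ((q' : ℕ) : ℤ)) := by
  intro q'
  rw [Vfun]
  refine Submodule.sum_mem _ fun q _ => ?_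
  split_ifs with hle
  · refine Submodule.smul_mem _ _ ?_
    have h1 := hmul ((q : ℕ) - (q' : ℕ)) (i - ((q : ℕ) : ℤ)) (f q) (hf q)
    have hle' : (q' : ℕ) ≤ (q : ℕ) := hle
    have h2 : (((q : ℕ) - (q' : ℕ) : ℕ) : ℤ) + (i - ((q : ℕ) : ℤ)) = i - ((q' : ℕ) : ℤ) := by
      omega
    rwa [h2] at h1
  · exact Submodule.zero_mem _

lemma Wfun_mem {d : ℕ} (ℓbar : B) (L : Matrix (Fin d) (Fin d) k)
    (hmul : ∀ (e : ℕ) (m : ℤ) (y : B), y ∈ 𝒜 m → ℓbar ^ e * y ∈ 𝒜 ((e : ℤ) + m))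
    (j : ℤ) (g : Fin d → B) (hg : ∀ r : Fin d, g r ∈ 𝒜 (j - ((r : ℕ) : ℤ))) :
    ∀ r : Fin d, Wfun ℓbar L g r ∈ 𝒜 (j - ((r : ℕ) : ℤ)) := by
  intro r
  rw [Wfun]
  refine Submodule.sum_mem _ fun r' _ => ?_
  split_ifs with hle
  · refine Submodule.smul_mem _ _ ?_
    have h1 := hmul ((r' : ℕ) - (r : ℕ)) (j - ((r' : ℕ) : ℤ)) (g r') (hg r')
    have hle' : (r : ℕ) ≤ (r' : ℕ) := hle
    have h2 : (((r' : ℕ) - (r : ℕ) : ℕ) : ℤ) + (j - ((r' : ℕ) : ℤ)) = j - ((r : ℕ) : ℤ) := by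
      omega
    rwa [h2] at h1
  · exact Submodule.zero_mem _

end MemLemmas


/-- Let `A = B ⊗ₖ k[x]/(x^d)` with `d ≥ 1`, `ℓ̄ ∈ B₁`, `ℓ = ℓ̄ + x`.
Fix `i, t ≥ d - 1` with `B_{i+t} ≠ 0` and assume the characteristic of `k` is zero or a
prime not dividing `∏_{p=1}^{d-1} det C_{t,p,d}`.  Then `·ℓ^t : A_i → A_{i+t}` has full
rank iff the `d` maps `·ℓ̄^{2q+t-(d-1)} : B_{i-q} → B_{i+q+t-(d-1)}`, `q = 0, …, d-1`,
all have full rank for the same reason. -/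
theorem statement_6 {k B A : Type} [Field k]
    [CommRing B] [Algebra k B] [CommRing A] [Algebra k A]
    (𝒜 : ℤ → Submodule k B) (ℬ : ℤ → Submodule k A)
    (hB : IsStdGradedArtinian k B 𝒜) (hA : IsStdGradedArtinian k A ℬ)
    (d : ℕ) (hd : 1 ≤ d) (φ : B →ₐ[k] A) (x : A)
    (hext : IsCIExtension 𝒜 ℬ φ x d)
    (ℓbar : B) (hℓbar : ℓbar ∈ 𝒜 1)
    (i t : ℕ) (hi : d - 1 ≤ i) (ht : d - 1 ≤ t)
    (hBit : 𝒜 ((i : ℤ) + t) ≠ ⊥)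
    (hchar : CharCond k (∏ p ∈ Finset.Icc 1 (d - 1), (Cmat t p d).det)) :
    MulFullRank (ℬ (i : ℤ)) (ℬ ((i : ℤ) + t)) ((φ ℓbar + x) ^ t) ↔
      ((∀ q ∈ Finset.range d, MulInjOn (𝒜 ((i : ℤ) - q)) (ℓbar ^ (2 * q + t - (d - 1)))) ∨
       (∀ q ∈ Finset.range d,
          MulSurjOnto (𝒜 ((i : ℤ) - q)) (𝒜 ((i : ℤ) + q + t - ((d : ℤ) - 1)))
            (ℓbar ^ (2 * q + t - (d - 1))))) := by
  classical
  have hmul : ∀ (e : ℕ) (m : ℤ) (y : B), y ∈ 𝒜 m → ℓbar ^ e * y ∈ 𝒜 ((e : ℤ) + m) := by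
    intro e
    induction e with
    | zero => intro m y hy; simpa using hy
    | succ e ih =>
      intro m y hy
      have h1 : ℓbar ^ (e + 1) * y = ℓbar * (ℓbar ^ e * y) := by
        rw [pow_succ']
        rw [mul_assoc]
      have h2 := hB.mul_mem hℓbar (ih m y hy)
      rw [← h1] at h2
      have h3 : (1 : ℤ) + ((e : ℤ) + m) = ((e + 1 : ℕ) : ℤ) + m := by push_cast; ring
      rwa [h3] at h2
  have hminor : ∀ (m : ℕ) (h : m ≤ d), 0 < m →
      ((Hkmat k t d).submatrix (Fin.castLE h) (Fin.castLE h)).det ≠ 0 := by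
    intro m h hpos
    set Z : Matrix (Fin m) (Fin m) ℤ :=
      (Cmat t 0 d).submatrix (Fin.castLE h) (Fin.castLE h) with hZdef
    have hdet : ((Hkmat k t d).submatrix (Fin.castLE h) (Fin.castLE h)).det
        = ((Z.det : ℤ) : k) := by
      have hmap : (Hkmat k t d).submatrix (Fin.castLE h) (Fin.castLE h)
          = Z.map (Int.cast : ℤ → k) := by
        ext r c0
        simp [Hkmat, hZdef, Cmat, Matrix.submatrix_apply, Matrix.map_apply]
      rw [hmap]
      have := (RingHom.map_det (Int.castRingHom k) Z).symm
      simpa [RingHom.mapMatrix_apply] using this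
    rw [hdet]
    rcases Nat.lt_or_ge m d with hmd | hmd
    · have hdm : d - (d - m) = m := by omega
      have hZC : Z.det = (Cmat t (d - m) d).det := by
        have hZr : Z = (Matrix.reindex (finCongr hdm) (finCongr hdm)) (Cmat t (d - m) d) := by
          ext r c0
          simp only [hZdef, Matrix.submatrix_apply, Matrix.reindex_apply, Cmat,
            Matrix.of_apply]
          congr 2 <;> simp
        rw [hZr, Matrix.det_reindex_self]
      rw [hZC]
      have hCne : (Cmat t (d - m) d).det ≠ 0 := det_Cmat_ne_zero t (d - m) d hd (by omega) ht
      rcases hchar with hc0 | ⟨pp, hpp, hcharp, hnd⟩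
      · haveI := hc0
        exact Int.cast_ne_zero.mpr hCne
      · intro h0
        have hdvd : (pp : ℤ) ∣ (Cmat t (d - m) d).det :=
          (CharP.intCast_eq_zero_iff k pp _).mp h0
        refine hnd (dvd_trans hdvd (Finset.dvd_prod_of_mem _ ?_))
        rw [Finset.mem_Icc]
        omega
    · have hdm0 : d - 0 = m := by omega
      have hZC : Z.det = (Cmat t 0 d).det := by
        have hZr : Z = (Matrix.reindex (finCongr hdm0) (finCongr hdm0)) (Cmat t 0 d) := by
          ext r c0
          simp only [hZdef, Matrix.submatrix_apply, Matrix.reindex_apply, Cmat,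
            Matrix.of_apply]
          congr 2 <;> simp
        rw [hZr, Matrix.det_reindex_self]
      rw [hZC]
      rcases Int.isUnit_iff.mp (isUnit_det_Cmat0 t d) with h1 | h1 <;> rw [h1] <;> simp
  obtain ⟨L, Dg, U, hLd, hLt, hUd, hUt, hDgd, hDgo, hLDU⟩ := exists_LDU d (Hkmat k t d) hminor
  have hfact : ∀ f : Fin d → B, Mop ℓbar t f = Wfun ℓbar L (Dfun ℓbar Dg t (Vfun ℓbar U f)) :=
    fun f => Mop_factor hd ℓbar t ht L Dg U hLt hUt hDgo hLDU.symm f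
  have hVIV : ∀ f : Fin d → B, triInv ℓbar (fun a b => U a b) (Vfun ℓbar U f) = f := by
    intro f
    rw [Vfun_eq ℓbar U hUd, ← Module.End.mul_apply, triInv_mul, Module.End.one_apply]
  have hVVI : ∀ f : Fin d → B, Vfun ℓbar U (triInv ℓbar (fun a b => U a b) f) = f := by
    intro f
    conv_lhs => rw [Vfun_eq ℓbar U hUd]
    rw [← Module.End.mul_apply, mul_triInv, Module.End.one_apply]
  have hWIW : ∀ g : Fin d → B,
      triInv ℓbar (fun a b => L (Fin.rev a) (Fin.rev b)) (Wfun ℓbar L g) = g := by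
    intro g
    rw [Wfun_eq ℓbar L hLd, ← Module.End.mul_apply, triInv_mul, Module.End.one_apply]
  have hWWI : ∀ g : Fin d → B,
      Wfun ℓbar L (triInv ℓbar (fun a b => L (Fin.rev a) (Fin.rev b)) g) = g := by
    intro g
    conv_lhs => rw [Wfun_eq ℓbar L hLd]
    rw [← Module.End.mul_apply, mul_triInv, Module.End.one_apply]
  have hV0 : Vfun ℓbar U (0 : Fin d → B) = 0 := by
    rw [Vfun_eq ℓbar U hUd]
    exact map_zero _
  have hW0 : Wfun ℓbar L (0 : Fin d → B) = 0 := by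
    rw [Wfun_eq ℓbar L hLd]
    exact map_zero _
  have hVI0 : triInv ℓbar (fun a b => U a b) (0 : Fin d → B) = 0 := map_zero _
  have hWI0 : triInv ℓbar (fun a b => L (Fin.rev a) (Fin.rev b)) (0 : Fin d → B) = 0 :=
    map_zero _
  have hVImem : ∀ (f : Fin d → B), (∀ q : Fin d, f q ∈ 𝒜 ((i : ℤ) - ((q : ℕ) : ℤ))) →
      ∀ q : Fin d, triInv ℓbar (fun a b => U a b) f q ∈ 𝒜 ((i : ℤ) - ((q : ℕ) : ℤ)) := by
    intro f hf
    refine triInv_mem 𝒜 ℓbar _ (fun q => (i : ℤ) - ((q : ℕ) : ℤ)) hmul ?_ f hf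
    intro a b hab
    have : (a : ℕ) ≤ (b : ℕ) := (Fin.lt_def.mp hab).le
    beta_reduce
    omega
  have hWImem : ∀ (g : Fin d → B), (∀ r : Fin d, g r ∈ 𝒜 (((i : ℤ) + t) - ((r : ℕ) : ℤ))) →
      ∀ r : Fin d, triInv ℓbar (fun a b => L (Fin.rev a) (Fin.rev b)) g r
        ∈ 𝒜 (((i : ℤ) + t) - ((r : ℕ) : ℤ)) := by
    intro g hg
    refine triInv_mem 𝒜 ℓbar _ (fun r => ((i : ℤ) + t) - ((r : ℕ) : ℤ)) hmul ?_ g hg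
    intro a b hab
    have : (a : ℕ) ≤ (b : ℕ) := (Fin.lt_def.mp hab).le
    beta_reduce
    omega
  have hE : ∀ f : Fin d → B, Emap φ x f = ∑ q : Fin d, x ^ (q : ℕ) * φ (f q) := fun f => rfl
  -- Level 1: injectivity
  have hAinjM : MulInjOn (ℬ (i : ℤ)) ((φ ℓbar + x) ^ t) ↔
      (∀ f : Fin d → B, (∀ q : Fin d, f q ∈ 𝒜 ((i : ℤ) - ((q : ℕ) : ℤ))) →
        Mop ℓbar t f = 0 → f = 0) := by
    constructor
    · intro hI f hf hM0
      have h0 : (φ ℓbar + x) ^ t * Emap φ x f = 0 := by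
        rw [mul_pow_Emap φ x hext.x_pow hd ℓbar t ht f, hM0, Emap_zero]
      have hmem : Emap φ x f ∈ ℬ (i : ℤ) := by
        rw [hE]
        exact hext.decomp_mem _ f hf
      have hEf0 : Emap φ x f = 0 := hI _ hmem h0
      have hq := hext.decomp_unique (i : ℤ) f hf (by rw [← hE]; exact hEf0)
      funext q
      exact hq q
    · intro hR v hv h0
      obtain ⟨f, hf, hvE⟩ := hext.decomp_exists (i : ℤ) v hv
      have hv' : v = Emap φ x f := by rw [hE]; exact hvE
      have h1 : Emap φ x (Mop ℓbar t f) = 0 := by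
        rw [← mul_pow_Emap φ x hext.x_pow hd ℓbar t ht f, ← hv', h0]
      have hMmem : ∀ q : Fin d, Mop ℓbar t f q ∈ 𝒜 (((i : ℤ) + t) - ((q : ℕ) : ℤ)) :=
        Mop_mem 𝒜 hd ℓbar t ht hmul (i : ℤ) f hf
      have hM0 : Mop ℓbar t f = 0 := by
        have hq := hext.decomp_unique ((i : ℤ) + t) _ hMmem (by rw [← hE]; exact h1)
        funext q
        exact hq q
      rw [hv', hR f hf hM0, Emap_zero]
  -- Level 1: surjectivity
  have hAsurjM : MulSurjOnto (ℬ (i : ℤ)) (ℬ ((i : ℤ) + t)) ((φ ℓbar + x) ^ t) ↔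
      (∀ g : Fin d → B, (∀ r : Fin d, g r ∈ 𝒜 (((i : ℤ) + t) - ((r : ℕ) : ℤ))) →
        ∃ f : Fin d → B, (∀ q : Fin d, f q ∈ 𝒜 ((i : ℤ) - ((q : ℕ) : ℤ))) ∧
          Mop ℓbar t f = g) := by
    constructor
    · intro hS g hg
      have hgB : Emap φ x g ∈ ℬ ((i : ℤ) + t) := by
        rw [hE]
        exact hext.decomp_mem _ g hg
      obtain ⟨v, hvB, hvE⟩ := hS (Emap φ x g) hgB
      obtain ⟨f, hf, hfE⟩ := hext.decomp_exists (i : ℤ) v hvB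
      refine ⟨f, hf, ?_⟩
      have h1 : Emap φ x (Mop ℓbar t f) = Emap φ x g := by
        rw [← mul_pow_Emap φ x hext.x_pow hd ℓbar t ht f,
          show Emap φ x f = v from by rw [hE]; exact hfE.symm]
        exact hvE
      have hdmem : ∀ q : Fin d, (Mop ℓbar t f - g) q ∈ 𝒜 (((i : ℤ) + t) - ((q : ℕ) : ℤ)) :=
        fun q => sub_mem (Mop_mem 𝒜 hd ℓbar t ht hmul (i : ℤ) f hf q) (hg q)
      have h2 : Emap φ x (Mop ℓbar t f - g) = 0 := by
        rw [Emap_sub, h1, sub_self]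
      have h3 := hext.decomp_unique ((i : ℤ) + t) _ hdmem (by rw [← hE]; exact h2)
      funext q
      have h4 := h3 q
      rw [Pi.sub_apply] at h4
      exact sub_eq_zero.mp h4
    · intro hS w hw
      obtain ⟨g, hg, hgE⟩ := hext.decomp_exists ((i : ℤ) + t) w hw
      obtain ⟨f, hf, hMf⟩ := hS g hg
      refine ⟨Emap φ x f, by rw [hE]; exact hext.decomp_mem _ f hf, ?_⟩
      rw [mul_pow_Emap φ x hext.x_pow hd ℓbar t ht f, hMf, hE]
      exact hgE.symm
  -- Level 2: injectivity
  have hMinjD : (∀ f : Fin d → B, (∀ q : Fin d, f q ∈ 𝒜 ((i : ℤ) - ((q : ℕ) : ℤ))) →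
        Mop ℓbar t f = 0 → f = 0) ↔
      (∀ f : Fin d → B, (∀ q : Fin d, f q ∈ 𝒜 ((i : ℤ) - ((q : ℕ) : ℤ))) →
        Dfun ℓbar Dg t f = 0 → f = 0) := by
    constructor
    · intro hM f hf hD0'
      have hf'mem := hVImem f hf
      have hMf' : Mop ℓbar t (triInv ℓbar (fun a b => U a b) f) = 0 := by
        rw [hfact, hVVI, hD0', hW0]
      have hf'0 : triInv ℓbar (fun a b => U a b) f = 0 := hM _ hf'mem hMf'
      have hfeq : f = Vfun ℓbar U (triInv ℓbar (fun a b => U a b) f) := (hVVI f).symm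
      rw [hfeq, hf'0, hV0]
    · intro hD f hf hM0
      have h1 : Wfun ℓbar L (Dfun ℓbar Dg t (Vfun ℓbar U f)) = 0 := by
        rw [← hfact]
        exact hM0
      have h2 : Dfun ℓbar Dg t (Vfun ℓbar U f) = 0 := by
        have h2' := congrArg (triInv ℓbar (fun a b => L (Fin.rev a) (Fin.rev b))) h1
        rwa [hWIW, hWI0] at h2'
      have h3 : Vfun ℓbar U f = 0 := hD _ (Vfun_mem 𝒜 ℓbar U hmul (i : ℤ) f hf) h2
      have h4 := congrArg (triInv ℓbar (fun a b => U a b)) h3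
      rwa [hVIV, hVI0] at h4
  -- Level 2: surjectivity
  have hMsurjD : (∀ g : Fin d → B, (∀ r : Fin d, g r ∈ 𝒜 (((i : ℤ) + t) - ((r : ℕ) : ℤ))) →
        ∃ f : Fin d → B, (∀ q : Fin d, f q ∈ 𝒜 ((i : ℤ) - ((q : ℕ) : ℤ))) ∧
          Mop ℓbar t f = g) ↔
      (∀ g : Fin d → B, (∀ r : Fin d, g r ∈ 𝒜 (((i : ℤ) + t) - ((r : ℕ) : ℤ))) →
        ∃ f : Fin d → B, (∀ q : Fin d, f q ∈ 𝒜 ((i : ℤ) - ((q : ℕ) : ℤ))) ∧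
          Dfun ℓbar Dg t f = g) := by
    constructor
    · intro hM g hg
      obtain ⟨f, hf, hMf⟩ := hM (Wfun ℓbar L g) (Wfun_mem 𝒜 ℓbar L hmul ((i : ℤ) + t) g hg)
      refine ⟨Vfun ℓbar U f, Vfun_mem 𝒜 ℓbar U hmul (i : ℤ) f hf, ?_⟩
      have h1 : Wfun ℓbar L (Dfun ℓbar Dg t (Vfun ℓbar U f)) = Wfun ℓbar L g := by
        rw [← hfact]
        exact hMf
      have h2 := congrArg (triInv ℓbar (fun a b => L (Fin.rev a) (Fin.rev b))) h1
      rwa [hWIW, hWIW] at h2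
    · intro hD g hg
      obtain ⟨f, hf, hDf⟩ :=
        hD (triInv ℓbar (fun a b => L (Fin.rev a) (Fin.rev b)) g) (hWImem g hg)
      refine ⟨triInv ℓbar (fun a b => U a b) f, hVImem f hf, ?_⟩
      rw [hfact, hVVI, hDf, hWWI]
  -- index兑换
  have hidx1 : ∀ q : Fin d, ((i : ℤ) + t) - (((Fin.rev q : Fin d) : ℕ) : ℤ)
      = (i : ℤ) + ((q : ℕ) : ℤ) + t - ((d : ℤ) - 1) := by
    intro q
    have hq := q.isLt
    rw [Fin.val_rev]
    omega
  -- Level 3: injectivity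
  have hDinjC : (∀ f : Fin d → B, (∀ q : Fin d, f q ∈ 𝒜 ((i : ℤ) - ((q : ℕ) : ℤ))) →
        Dfun ℓbar Dg t f = 0 → f = 0) ↔
      (∀ q ∈ Finset.range d, MulInjOn (𝒜 ((i : ℤ) - q)) (ℓbar ^ (2 * q + t - (d - 1)))) := by
    constructor
    · intro hD q hq v hvmem hv0
      rw [Finset.mem_range] at hq
      have hfmem : ∀ q' : Fin d,
          (fun q'' => if q'' = (⟨q, hq⟩ : Fin d) then v else 0) q' ∈ 𝒜 ((i : ℤ) - ((q' : ℕ) : ℤ)) := by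
        intro q'
        by_cases hq' : q' = (⟨q, hq⟩ : Fin d)
        · simp only [if_pos hq']
          subst hq'
          exact hvmem
        · simp only [if_neg hq']
          exact Submodule.zero_mem _
      have hDf : Dfun ℓbar Dg t (fun q'' => if q'' = (⟨q, hq⟩ : Fin d) then v else 0) = 0 := by
        funext r
        rw [Dfun]
        by_cases hr : Fin.rev r = (⟨q, hq⟩ : Fin d)
        · rw [hr]
          beta_reduce
          simp only [eq_self_iff_true, if_true]
          rw [show (t - (d - 1)) + 2 * (((⟨q, hq⟩ : Fin d) : Fin d) : ℕ)
              = 2 * q + t - (d - 1) from by simp only [Fin.val_mk]; omega]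
          rw [hv0, smul_zero]
          rfl
        · beta_reduce
          simp only [if_neg hr]
          rw [mul_zero, smul_zero]
          rfl
      have hf0 := hD _ hfmem hDf
      have := congrFun hf0 (⟨q, hq⟩ : Fin d)
      simpa using this
    · intro hC f hf hDf
      funext q'
      have h1 := congrFun hDf (Fin.rev q')
      simp only [Dfun, Fin.rev_rev] at h1
      have h2 : ℓbar ^ ((t - (d - 1)) + 2 * ((q' : ℕ))) * f q' = 0 := by
        rcases smul_eq_zero.mp h1 with h | h
        · exact absurd h (hDgd q')
        · exact h
      rw [show (t - (d - 1)) + 2 * ((q' : ℕ)) = 2 * (q' : ℕ) + t - (d - 1) from by omega] at h2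
      have := hC (q' : ℕ) (Finset.mem_range.mpr q'.isLt) (f q') (hf q') h2
      simpa using this
  -- Level 3: surjectivity
  have hDsurjC : (∀ g : Fin d → B, (∀ r : Fin d, g r ∈ 𝒜 (((i : ℤ) + t) - ((r : ℕ) : ℤ))) →
        ∃ f : Fin d → B, (∀ q : Fin d, f q ∈ 𝒜 ((i : ℤ) - ((q : ℕ) : ℤ))) ∧
          Dfun ℓbar Dg t f = g) ↔
      (∀ q ∈ Finset.range d, MulSurjOnto (𝒜 ((i : ℤ) - q))
        (𝒜 ((i : ℤ) + q + t - ((d : ℤ) - 1))) (ℓbar ^ (2 * q + t - (d - 1)))) := by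
    constructor
    · intro hD q hq w hw
      rw [Finset.mem_range] at hq
      have hgmem : ∀ r : Fin d,
          (fun r' => if r' = Fin.rev (⟨q, hq⟩ : Fin d) then w else 0) r
            ∈ 𝒜 (((i : ℤ) + t) - ((r : ℕ) : ℤ)) := by
        intro r
        by_cases hr : r = Fin.rev (⟨q, hq⟩ : Fin d)
        · simp only [if_pos hr]
          subst hr
          rw [hidx1 (⟨q, hq⟩ : Fin d)]
          exact hw
        · simp only [if_neg hr]
          exact Submodule.zero_mem _
      obtain ⟨f, hf, hDf⟩ := hD _ hgmem
      refine ⟨Dg (⟨q, hq⟩ : Fin d) (⟨q, hq⟩ : Fin d) • f (⟨q, hq⟩ : Fin d),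
        Submodule.smul_mem _ _ (hf (⟨q, hq⟩ : Fin d)), ?_⟩
      have h1 := congrFun hDf (Fin.rev (⟨q, hq⟩ : Fin d))
      simp only [Dfun, Fin.rev_rev, if_pos rfl] at h1
      rw [mul_smul_comm]
      rw [show 2 * q + t - (d - 1) = (t - (d - 1)) + 2 * (((⟨q, hq⟩ : Fin d)) : ℕ) from by
        simp only [Fin.val_mk]; omega]
      exact h1
    · intro hC g hg
      have hex : ∀ q : Fin d, ∃ v, v ∈ 𝒜 ((i : ℤ) - ((q : ℕ) : ℤ)) ∧
          ℓbar ^ (2 * (q : ℕ) + t - (d - 1)) * v = g (Fin.rev q) := by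
        intro q
        have hgq : g (Fin.rev q) ∈ 𝒜 ((i : ℤ) + ((q : ℕ) : ℤ) + t - ((d : ℤ) - 1)) := by
          have := hg (Fin.rev q)
          rwa [hidx1 q] at this
        obtain ⟨v, hv1, hv2⟩ := hC (q : ℕ) (Finset.mem_range.mpr q.isLt) (g (Fin.rev q)) hgq
        exact ⟨v, hv1, hv2⟩
      choose vf hv1 hv2 using hex
      refine ⟨fun q => (Dg q q)⁻¹ • vf q, fun q => Submodule.smul_mem _ _ (hv1 q), ?_⟩
      funext r
      rw [Dfun, mul_smul_comm, smul_smul, mul_inv_cancel₀ (hDgd (Fin.rev r)), one_smul]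
      rw [show (t - (d - 1)) + 2 * ((Fin.rev r : Fin d) : ℕ)
          = 2 * ((Fin.rev r : Fin d) : ℕ) + t - (d - 1) from by omega]
      rw [hv2 (Fin.rev r), Fin.rev_rev]
  exact or_congr (hAinjM.trans (hMinjD.trans hDinjC)) (hAsurjM.trans (hMsurjD.trans hDsurjC))
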